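/- arXiv:1303.4289 — 2 statements merged into one kernel-verified Lean document; each statement's English description precedes it below -/
import Mathlib

section
/- Fix ρ > 0 and set f_opt = (1 + σw²/(σx²·ρ)) · x/‖x‖². Then f_opt is a global minimizer of the zeroth-order symbol-estimate MSE with random channel: for every nonzero filter f ∈ ℂ^B, M_rc(f_opt) ≤ M_rc(f). -/
open MeasureTheory

/-- `φ(f) = fᴴ x = Σᵢ conj(fᵢ)·xᵢ`. -/
noncomputable def phi {B : ℕ} (x f : Fin B → ℂ) : ℂ :=
  ∑ i, (starRingEnd ℂ) (f i) * x i

/-- Squared Euclidean norm `‖f‖² = Σᵢ |fᵢ|²`. -/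
noncomputable def nsq {B : ℕ} (f : Fin B → ℂ) : ℝ :=
  ∑ i, Complex.normSq (f i)

/-- Zeroth-order symbol-estimate MSE of the ZF equalizer, random channel with
prior second moment `ρ = E[|h|²]`. -/
noncomputable def Mrc {B : ℕ} (σx2 σw2 ρ : ℝ) (x f : Fin B → ℂ) : ℝ :=
  (σx2 * (ρ * Complex.normSq (phi x f - 1) + σw2 * nsq f) + σw2) /
    (ρ * Complex.normSq (phi x f) + σw2 * nsq f)

/-- The optimal filter `f_opt = (1 + σw²/(σx²·ρ)) · x/‖x‖²` for the random channel case. -/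
noncomputable def fOptRc {B : ℕ} (σx2 σw2 ρ : ℝ) (x : Fin B → ℂ) : Fin B → ℂ :=
  fun i => ((1 + σw2 / (σx2 * ρ) : ℝ) : ℂ) * (x i / (nsq x : ℂ))

lemma keyIneq (σx2 σw2 ρ X t p n : ℝ) (hσx : 0 < σx2) (hσw : 0 < σw2) (hρ : 0 < ρ)
    (hX : 0 < X) (hn : 0 < n) (h1 : t^2 ≤ p) (h2 : p ≤ X * n) :
    (σx2 * (ρ * ((1 + σw2/(σx2*ρ)) - 1)^2 + σw2 * ((1 + σw2/(σx2*ρ))^2 / X)) + σw2) /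
      (ρ * (1 + σw2/(σx2*ρ))^2 + σw2 * ((1 + σw2/(σx2*ρ))^2 / X))
    ≤ (σx2 * (ρ * (p - 2*t + 1) + σw2 * n) + σw2) / (ρ * p + σw2 * n) := by
  set s := σx2 * ρ with hs
  have hs0 : 0 < s := mul_pos hσx hρ
  set K := s + σw2 with hK
  have hK0 : 0 < K := by positivity
  set D := ρ * p + σw2 * n with hD
  have hp0 : 0 ≤ p := le_trans (sq_nonneg t) h1
  have hD0 : 0 < D := by positivity
  have hA0 : 0 < K * (ρ * X + σw2) := by positivity
  have hL : (σx2 * (ρ * ((1 + σw2/(σx2*ρ)) - 1)^2 + σw2 * ((1 + σw2/(σx2*ρ))^2 / X)) + σw2) /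
      (ρ * (1 + σw2/(σx2*ρ))^2 + σw2 * ((1 + σw2/(σx2*ρ))^2 / X))
      = σx2 - s^2 * X / (K * (ρ * X + σw2)) := by
    rw [hK, hs]
    field_simp
    ring
  have hR : (σx2 * (ρ * (p - 2*t + 1) + σw2 * n) + σw2) / (ρ * p + σw2 * n)
      = σx2 + (K - 2*s*t)/D := by
    rw [hK, hs, hD]
    field_simp
    ring
  rw [hL, hR]
  have main : -(s^2 * X / (K * (ρ * X + σw2))) ≤ (K - 2*s*t)/D := by
    rcases le_or_gt 0 (K - 2*s*t) with h | h
    · have l1 : 0 ≤ s^2 * X / (K * (ρ * X + σw2)) := by positivity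
      have l2 : 0 ≤ (K - 2*s*t)/D := div_nonneg h hD0.le
      linarith
    · have ht : 0 < t := by nlinarith
      have hD' : t^2 * (ρ * X + σw2) ≤ D * X := by
        nlinarith [mul_le_mul_of_nonneg_left h1 (mul_pos hρ hX).le,
          mul_le_mul_of_nonneg_left h2 hσw.le, mul_le_mul_of_nonneg_left h1 hσw.le]
      have h4 : (2*s*t - K)/D ≤ s^2 * X / (K * (ρ * X + σw2)) := by
        rw [div_le_div_iff₀ hD0 hA0]
        nlinarith [sq_nonneg (s*t - K), mul_le_mul_of_nonneg_left hD' (sq_nonneg s),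
          mul_pos hρ hX]
      have e : (K - 2*s*t)/D = -((2*s*t - K)/D) := by ring
      rw [e]
      exact neg_le_neg h4
  linarith

lemma nsq_nonneg' {B : ℕ} (f : Fin B → ℂ) : 0 ≤ nsq f :=
  Finset.sum_nonneg fun _ _ => Complex.normSq_nonneg _

lemma nsq_pos' {B : ℕ} {f : Fin B → ℂ} (hf : f ≠ 0) : 0 < nsq f := by
  rcases (nsq_nonneg' f).lt_or_eq with h | h
  · exact h
  · exfalso
    apply hf
    funext i
    have := (Finset.sum_eq_zero_iff_of_nonneg
      (fun i _ => Complex.normSq_nonneg (f i))).mp h.symm i (Finset.mem_univ i)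
    simpa [Complex.normSq_eq_zero] using this

lemma cs' {B : ℕ} (x f : Fin B → ℂ) : Complex.normSq (phi x f) ≤ nsq x * nsq f := by
  have h1 : ‖phi x f‖ ≤ ∑ i, ‖f i‖ * ‖x i‖ := by
    refine (norm_sum_le _ _).trans ?_
    apply Finset.sum_le_sum
    intro i _
    simp [map_mul]
  have h2 : (∑ i, ‖f i‖ * ‖x i‖)^2 ≤
      (∑ i, ‖f i‖^2) * (∑ i, ‖x i‖^2) :=
    Finset.sum_mul_sq_le_sq_mul_sq Finset.univ _ _
  have h3 : Complex.normSq (phi x f) = ‖phi x f‖ ^ 2 := (Complex.sq_norm _).symm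
  have h4 : ‖phi x f‖ ^ 2 ≤ (∑ i, ‖f i‖ * ‖x i‖)^2 := by
    apply pow_le_pow_left₀ (norm_nonneg _) h1
  have h5 : nsq f = ∑ i, ‖f i‖^2 := by
    simp [nsq, Complex.sq_norm]
  have h6 : nsq x = ∑ i, ‖x i‖^2 := by
    simp [nsq, Complex.sq_norm]
  rw [h3, h5, h6]
  calc ‖phi x f‖ ^ 2 ≤ _ := h4
    _ ≤ _ := h2
    _ = _ := mul_comm _ _

lemma phi_self' {B : ℕ} (x : Fin B → ℂ) : phi x x = (nsq x : ℂ) := by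
  simp [phi, nsq, Complex.normSq_eq_conj_mul_self]

lemma phi_opt' {B : ℕ} (x : Fin B → ℂ) (c X : ℝ) (hX : X = nsq x) (hX0 : X ≠ 0) :
    phi x (fun i => (c:ℂ) * (x i / (X:ℂ))) = (c:ℂ) := by
  have : phi x (fun i => (c:ℂ) * (x i / (X:ℂ))) = (c:ℂ)/(X:ℂ) * phi x x := by
    simp only [phi, Finset.mul_sum]
    apply Finset.sum_congr rfl
    intro i _
    simp [map_mul, map_div₀, Complex.conj_ofReal]
    ring
  rw [this, phi_self', ← hX, div_mul_eq_mul_div, mul_div_assoc,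
    div_self (by exact_mod_cast hX0), mul_one]

lemma nsq_opt' {B : ℕ} (x : Fin B → ℂ) (c X : ℝ) (hX : X = nsq x) (hX0 : X ≠ 0) :
    nsq (fun i => (c:ℂ) * (x i / (X:ℂ))) = c^2 / X := by
  have : nsq (fun i => (c:ℂ) * (x i / (X:ℂ))) = c^2/X^2 * nsq x := by
    simp only [nsq, Finset.mul_sum]
    apply Finset.sum_congr rfl
    intro i _
    simp [Complex.normSq_mul, Complex.normSq_div, Complex.normSq_ofReal]
    ring
  rw [this, ← hX]
  field_simp

lemma normSq_sub_one' (z : ℂ) :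
    Complex.normSq (z - 1) = Complex.normSq z - 2 * z.re + 1 := by
  simp [Complex.normSq_apply, Complex.sub_re, Complex.sub_im]
  ring

/-- `f_opt = (1 + σw²/(σx²·ρ)) · x/‖x‖²` is a global minimizer of the
zeroth-order symbol-estimate MSE `[MSE_x^rc(ZF)]₀`. -/
theorem fopt_optimal_zeroth_order_rc_mse
    (B : ℕ) (hB : 1 ≤ B) (x : Fin B → ℂ) (hx : x ≠ 0)
    (σx2 σw2 : ℝ) (hσx : 0 < σx2) (hσw : 0 < σw2)
    (ρ : ℝ) (hρ : 0 < ρ) :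
    ∀ f : Fin B → ℂ, f ≠ 0 →
      Mrc σx2 σw2 ρ x (fOptRc σx2 σw2 ρ x) ≤ Mrc σx2 σw2 ρ x f := by
  intro f hf
  have hXpos : 0 < nsq x := nsq_pos' hx
  have hn : 0 < nsq f := nsq_pos' hf
  have hcs : Complex.normSq (phi x f) ≤ nsq x * nsq f := cs' x f
  have hp : (phi x f).re ^ 2 ≤ Complex.normSq (phi x f) := by
    rw [Complex.normSq_apply]
    nlinarith [sq_nonneg ((phi x f).im)]
  have key := keyIneq σx2 σw2 ρ (nsq x) (phi x f).re (Complex.normSq (phi x f)) (nsq f)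
    hσx hσw hρ hXpos hn hp hcs
  set c : ℝ := 1 + σw2 / (σx2 * ρ) with hc
  have hphi : phi x (fOptRc σx2 σw2 ρ x) = (c:ℂ) :=
    phi_opt' x c (nsq x) rfl hXpos.ne'
  have hnsqopt : nsq (fOptRc σx2 σw2 ρ x) = c^2 / nsq x :=
    nsq_opt' x c (nsq x) rfl hXpos.ne'
  have hcast1 : Complex.normSq ((c:ℂ)) = c^2 := by
    rw [Complex.normSq_ofReal]; ring
  have hcast2 : Complex.normSq ((c:ℂ) - 1) = (c - 1)^2 := by
    have : ((c:ℂ) - 1) = ((c - 1 : ℝ) : ℂ) := by push_cast; ring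
    rw [this, Complex.normSq_ofReal]; ring
  have eL : Mrc σx2 σw2 ρ x (fOptRc σx2 σw2 ρ x)
      = (σx2 * (ρ * (c - 1)^2 + σw2 * (c^2 / nsq x)) + σw2) /
        (ρ * c^2 + σw2 * (c^2 / nsq x)) := by
    rw [Mrc, hphi, hnsqopt, hcast1, hcast2]
  have eR : Mrc σx2 σw2 ρ x f
      = (σx2 * (ρ * (Complex.normSq (phi x f) - 2 * (phi x f).re + 1) + σw2 * nsq f) + σw2) /
        (ρ * Complex.normSq (phi x f) + σw2 * nsq f) := by
    rw [Mrc, normSq_sub_one']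
  rw [eL, eR]
  convert key using 4 <;> ring
end

section
/- Fix ρ > 0. Then the MVU filter is strictly better than the MMSE filter for the zeroth-order symbol-estimate MSE with random channel: M_rc(f_MVU) < M_rc(f_MMSE), where f_MVU = x/‖x‖² and f_MMSE = ρ·x/(ρ‖x‖² + σw²). -/
open MeasureTheory

/-- The MVU channel-estimating filter `f_MVU = x / ‖x‖²`. -/
noncomputable def fMVU {B : ℕ} (x : Fin B → ℂ) : Fin B → ℂ :=
  fun i => x i / (nsq x : ℂ)

/-- The MMSE channel-estimating filter `f_MMSE = ρ·x / (ρ‖x‖² + σw²)`. -/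
noncomputable def fMMSE {B : ℕ} (σw2 ρ : ℝ) (x : Fin B → ℂ) : Fin B → ℂ :=
  fun i => (ρ : ℂ) * x i / ((ρ * nsq x + σw2 : ℝ) : ℂ)

lemma phi_smul {B : ℕ} (x : Fin B → ℂ) (c : ℝ) :
    phi x (fun i => (c : ℂ) * x i) = ((c * nsq x : ℝ) : ℂ) := by
  have hsum : (∑ i, (starRingEnd ℂ) (x i) * x i) = ((nsq x : ℝ) : ℂ) := by
    rw [nsq]
    push_cast
    refine Finset.sum_congr rfl fun i _ => ?_
    rw [← Complex.mul_conj]; ring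
  rw [phi]
  simp only [map_mul, Complex.conj_ofReal, mul_assoc]
  rw [← Finset.mul_sum, hsum]
  push_cast
  ring

lemma nsq_smul {B : ℕ} (x : Fin B → ℂ) (c : ℝ) :
    nsq (fun i => (c : ℂ) * x i) = c ^ 2 * nsq x := by
  simp only [nsq, Complex.normSq_mul, Complex.normSq_ofReal, ← Finset.mul_sum]
  ring

lemma Mrc_smul {B : ℕ} (σx2 σw2 ρ : ℝ) (x : Fin B → ℂ) (c : ℝ) :
    Mrc σx2 σw2 ρ x (fun i => (c : ℂ) * x i) =
      (σx2 * (ρ * (c * nsq x - 1) ^ 2 + σw2 * (c ^ 2 * nsq x)) + σw2) /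
        (ρ * (c * nsq x) ^ 2 + σw2 * (c ^ 2 * nsq x)) := by
  rw [Mrc, phi_smul, nsq_smul]
  have h1 : Complex.normSq (((c * nsq x : ℝ) : ℂ) - 1) = (c * nsq x - 1) ^ 2 := by
    rw [show ((c * nsq x : ℝ) : ℂ) - 1 = ((c * nsq x - 1 : ℝ) : ℂ) by push_cast; ring,
      Complex.normSq_ofReal]; ring
  have h2 : Complex.normSq ((c * nsq x : ℝ) : ℂ) = (c * nsq x) ^ 2 := by
    rw [Complex.normSq_ofReal]; ring
  rw [h1, h2]

/-- The MVU filter is strictly better than the MMSE filter for the zeroth-order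
symbol-estimate MSE with random channel. -/
theorem mvu_strictly_better_than_mmse_rc_mse
    (B : ℕ) (hB : 1 ≤ B) (x : Fin B → ℂ) (hx : x ≠ 0)
    (σx2 σw2 : ℝ) (hσx : 0 < σx2) (hσw : 0 < σw2)
    (ρ : ℝ) (hρ : 0 < ρ) :
    Mrc σx2 σw2 ρ x (fMVU x) < Mrc σx2 σw2 ρ x (fMMSE σw2 ρ x) := by
  have hX : 0 < nsq x := by
    obtain ⟨i, hi⟩ := Function.ne_iff.mp hx
    exact Finset.sum_pos' (fun j _ => Complex.normSq_nonneg _)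
      ⟨i, Finset.mem_univ i, by simpa [Complex.normSq_pos] using hi⟩
  set X := nsq x with hXdef
  have hD : 0 < ρ * X + σw2 := by positivity
  have h1 : fMVU x = fun i => ((X⁻¹ : ℝ) : ℂ) * x i := by
    funext i; simp [fMVU, div_eq_mul_inv, mul_comm]; exact Or.inl rfl
  have h2 : fMMSE σw2 ρ x = fun i => ((ρ / (ρ * X + σw2) : ℝ) : ℂ) * x i := by
    funext i; rw [fMMSE]; push_cast; ring
  have hD' : (ρ * X + σw2) ≠ 0 := hD.ne'
  have hX' : X ≠ 0 := hX.ne'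
  rw [h1, h2, Mrc_smul, Mrc_smul, ← hXdef]
  have eL : (σx2 * (ρ * (X⁻¹ * X - 1) ^ 2 + σw2 * ((X⁻¹) ^ 2 * X)) + σw2) /
      (ρ * (X⁻¹ * X) ^ 2 + σw2 * ((X⁻¹) ^ 2 * X))
      = σw2 * (σx2 + X) / (ρ * X + σw2) := by
    rw [inv_mul_cancel₀ hX']
    field_simp
    ring
  have eR : (σx2 * (ρ * (ρ / (ρ * X + σw2) * X - 1) ^ 2 +
        σw2 * ((ρ / (ρ * X + σw2)) ^ 2 * X)) + σw2) /
      (ρ * (ρ / (ρ * X + σw2) * X) ^ 2 + σw2 * ((ρ / (ρ * X + σw2)) ^ 2 * X))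
      = σw2 * (σx2 * ρ + (ρ * X + σw2)) / (ρ ^ 2 * X) := by
    have hsub : ρ / (ρ * X + σw2) * X - 1 = -σw2 / (ρ * X + σw2) := by field_simp; ring
    rw [hsub]
    rw [div_eq_div_iff (by positivity) (by positivity)]
    field_simp
    ring
  rw [eL, eR, div_lt_div_iff₀ hD (by positivity)]
  nlinarith [mul_pos (mul_pos hσx hσw) (mul_pos hρ hσw), mul_pos (mul_pos hσw hσw) (mul_pos hσw hσw),
    mul_pos (mul_pos hρ hX) (mul_pos hσw hσw), mul_pos hσw hσw, mul_pos hρ hX]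
end
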